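/- Let n ≥ 1, let L be an n×n real matrix, and for h ∈ ℝ set D(h) = I − h·L. Then for every index i, as h → 0, the (i,i) entry of the adjugate matrix satisfies adj(D(h))[i,i] = ∏_{k ≠ i} D(h)[k,k] − Σ_{unordered pairs {j,k} of distinct indices with j ≠ i, k ≠ i} D(h)[j,k]·D(h)[k,j]·∏_{l ∉ {i,j,k}} D(h)[l,l] + O(h³). -/

import Mathlib

open Asymptotics Finset
open Matrix Equiv Equiv.Perm

lemma adj_diag_eq {n : ℕ} (A : Matrix (Fin n) (Fin n) ℝ) (i : Fin n) :
    A.adjugate i i = ∑ σ ∈ univ.filter (fun σ : Perm (Fin n) => σ i = i),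
      ((Perm.sign σ : ℤ) : ℝ) * ∏ k ∈ univ.erase i, A (σ k) k := by
  rw [Matrix.adjugate_apply, Matrix.det_apply']
  rw [← Finset.sum_filter_add_sum_filter_not univ (fun σ : Perm (Fin n) => σ i = i)]
  have h2 : ∑ σ ∈ univ.filter (fun σ : Perm (Fin n) => ¬ σ i = i),
      ((Perm.sign σ : ℤ) : ℝ) * ∏ k, (A.updateRow i (Pi.single i 1)) (σ k) k = 0 := by
    apply Finset.sum_eq_zero
    intro σ hσ
    simp only [Finset.mem_filter, Finset.mem_univ, true_and] at hσ
    have hk : σ (σ⁻¹ i) = i := by simp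
    have hne : σ⁻¹ i ≠ i := by
      intro hc
      apply hσ
      conv_lhs => rw [← hc]
      simp
    have hz : (A.updateRow i (Pi.single i 1)) (σ (σ⁻¹ i)) (σ⁻¹ i) = 0 := by
      rw [hk, Matrix.updateRow_self, Pi.single_apply, if_neg hne]
    exact mul_eq_zero_of_right _ (Finset.prod_eq_zero (Finset.mem_univ (σ⁻¹ i)) hz)
  rw [h2, add_zero]
  apply Finset.sum_congr rfl
  intro σ hσ
  simp only [Finset.mem_filter, Finset.mem_univ, true_and] at hσ
  congr 1
  rw [← Finset.mul_prod_erase univ _ (Finset.mem_univ i)]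
  rw [hσ, Matrix.updateRow_self, Pi.single_eq_same, one_mul]
  apply Finset.prod_congr rfl
  intro k hk
  have hk' : k ≠ i := Finset.ne_of_mem_erase hk
  have : σ k ≠ i := fun hc => hk' (by rw [← hσ] at hc; exact σ.injective hc)
  rw [Matrix.updateRow_ne this]
lemma swap_inj {α : Type*} [DecidableEq α] [LinearOrder α] {a b c d : α}
    (hab : a < b) (hcd : c < d) (h : Equiv.swap a b = Equiv.swap c d) : a = c ∧ b = d := by
  have h1 : Equiv.swap c d a = b := by rw [← h, Equiv.swap_apply_left]
  rcases eq_or_ne a c with hac | hac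
  · subst hac
    rw [Equiv.swap_apply_left] at h1
    exact ⟨rfl, h1.symm⟩
  · rcases eq_or_ne a d with had | had
    · subst had
      rw [Equiv.swap_apply_right] at h1
      exact absurd (hcd.trans hab) (by rw [h1]; exact lt_irrefl b)
    · rw [Equiv.swap_apply_of_ne_of_ne hac had] at h1
      exact absurd hab (by rw [h1]; exact lt_irrefl b)

lemma swap_sum_eq {n : ℕ} (A : Matrix (Fin n) (Fin n) ℝ) (i : Fin n) :
    ∑ σ ∈ univ.filter (fun σ : Perm (Fin n) => σ i = i ∧ σ.support.card = 2),
      ((Perm.sign σ : ℤ) : ℝ) * ∏ k ∈ univ.erase i, A (σ k) k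
    = - ∑ p ∈ univ.filter (fun p : Fin n × Fin n => p.1 < p.2 ∧ p.1 ≠ i ∧ p.2 ≠ i),
        A p.1 p.2 * A p.2 p.1 *
          ∏ l ∈ univ.filter (fun l => l ≠ i ∧ l ≠ p.1 ∧ l ≠ p.2), A l l := by
  rw [← Finset.sum_neg_distrib]
  symm
  apply Finset.sum_bij (fun (p : Fin n × Fin n) _ => Equiv.swap p.1 p.2)
  · intro p hp
    simp only [Finset.mem_filter, Finset.mem_univ, true_and] at hp ⊢
    obtain ⟨hlt, h1, h2⟩ := hp
    refine ⟨Equiv.swap_apply_of_ne_of_ne (Ne.symm h1) (Ne.symm h2), ?_⟩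
    exact Equiv.Perm.card_support_swap hlt.ne
  · intro p hp q hq hpq
    simp only [Finset.mem_filter, Finset.mem_univ, true_and] at hp hq
    have := swap_inj hp.1 hq.1 hpq
    exact Prod.ext this.1 this.2
  · intro σ hσ
    simp only [Finset.mem_filter, Finset.mem_univ, true_and] at hσ
    obtain ⟨hfix, hcard⟩ := hσ
    obtain ⟨x, y, hxy, rfl⟩ := Equiv.Perm.card_support_eq_two.mp hcard
    have hxi : x ≠ i := by
      rintro rfl
      rw [Equiv.swap_apply_left] at hfix
      exact hxy hfix.symm
    have hyi : y ≠ i := by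
      rintro rfl
      rw [Equiv.swap_apply_right] at hfix
      exact hxy hfix
    rcases hxy.lt_or_gt with hlt | hlt
    · exact ⟨(x, y), by simp [hlt, hxi, hyi], rfl⟩
    · exact ⟨(y, x), by simp [hlt, hxi, hyi], Equiv.swap_comm y x⟩
  · intro p hp
    simp only [Finset.mem_filter, Finset.mem_univ, true_and] at hp
    obtain ⟨hlt, h1, h2⟩ := hp
    have hne : p.1 ≠ p.2 := hlt.ne
    rw [Equiv.Perm.sign_swap hne]
    have hm1 : p.1 ∈ univ.erase i := Finset.mem_erase.mpr ⟨h1, Finset.mem_univ _⟩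
    rw [← Finset.mul_prod_erase _ _ hm1]
    have hm2 : p.2 ∈ (univ.erase i).erase p.1 :=
      Finset.mem_erase.mpr ⟨hne.symm, Finset.mem_erase.mpr ⟨h2, Finset.mem_univ _⟩⟩
    rw [← Finset.mul_prod_erase _ _ hm2]
    rw [Equiv.swap_apply_left, Equiv.swap_apply_right]
    have hset : ((univ.erase i).erase p.1).erase p.2
        = univ.filter (fun l => l ≠ i ∧ l ≠ p.1 ∧ l ≠ p.2) := by
      ext l
      simp only [Finset.mem_erase, Finset.mem_filter, Finset.mem_univ, true_and, and_true]
      tauto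
    have hprod : ∏ k ∈ ((univ.erase i).erase p.1).erase p.2, A (Equiv.swap p.1 p.2 k) k
        = ∏ l ∈ univ.filter (fun l => l ≠ i ∧ l ≠ p.1 ∧ l ≠ p.2), A l l := by
      rw [hset]
      apply Finset.prod_congr rfl
      intro k hk
      simp only [Finset.mem_filter] at hk
      rw [Equiv.swap_apply_of_ne_of_ne hk.2.2.1 hk.2.2.2]
    rw [hprod]
    push_cast
    ring
lemma pointwise_eq {n : ℕ} (A : Matrix (Fin n) (Fin n) ℝ) (i : Fin n) :
    A.adjugate i i -
      (∏ k ∈ univ.filter (fun k => k ≠ i), A k k -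
        ∑ p ∈ univ.filter (fun p : Fin n × Fin n => p.1 < p.2 ∧ p.1 ≠ i ∧ p.2 ≠ i),
          A p.1 p.2 * A p.2 p.1 *
            ∏ l ∈ univ.filter (fun l => l ≠ i ∧ l ≠ p.1 ∧ l ≠ p.2), A l l)
    = ∑ σ ∈ univ.filter (fun σ : Perm (Fin n) => σ i = i ∧ 3 ≤ σ.support.card),
        ((Perm.sign σ : ℤ) : ℝ) * ∏ k ∈ univ.erase i, A (σ k) k := by
  rw [adj_diag_eq, Finset.filter_ne']
  rw [← Finset.sum_filter_add_sum_filter_not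
    (univ.filter (fun σ : Perm (Fin n) => σ i = i)) (fun σ => 3 ≤ σ.support.card),
    Finset.filter_filter, Finset.filter_filter]
  have h2 : ∑ σ ∈ univ.filter
        (fun σ : Perm (Fin n) => σ i = i ∧ ¬ 3 ≤ σ.support.card),
        ((Perm.sign σ : ℤ) : ℝ) * ∏ k ∈ univ.erase i, A (σ k) k
      = (- ∑ p ∈ univ.filter (fun p : Fin n × Fin n => p.1 < p.2 ∧ p.1 ≠ i ∧ p.2 ≠ i),
          A p.1 p.2 * A p.2 p.1 *
            ∏ l ∈ univ.filter (fun l => l ≠ i ∧ l ≠ p.1 ∧ l ≠ p.2), A l l)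
        + ∏ k ∈ univ.erase i, A k k := by
    rw [← Finset.sum_filter_add_sum_filter_not
      (univ.filter (fun σ : Perm (Fin n) => σ i = i ∧ ¬ 3 ≤ σ.support.card))
      (fun σ => σ.support.card = 2),
      Finset.filter_filter, Finset.filter_filter]
    have e1 : univ.filter
          (fun σ : Perm (Fin n) => (σ i = i ∧ ¬ 3 ≤ σ.support.card) ∧ σ.support.card = 2)
        = univ.filter (fun σ : Perm (Fin n) => σ i = i ∧ σ.support.card = 2) := by
      ext σ
      simp only [Finset.mem_filter, Finset.mem_univ, true_and]
      constructor
      · rintro ⟨⟨h1, _⟩, h3⟩; exact ⟨h1, h3⟩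
      · rintro ⟨h1, h2⟩; exact ⟨⟨h1, by omega⟩, h2⟩
    have e2 : univ.filter
          (fun σ : Perm (Fin n) => (σ i = i ∧ ¬ 3 ≤ σ.support.card) ∧ ¬ σ.support.card = 2)
        = {1} := by
      ext σ
      simp only [Finset.mem_filter, Finset.mem_univ, true_and, Finset.mem_singleton]
      constructor
      · rintro ⟨⟨h1, h2⟩, h3⟩
        have h4 := Equiv.Perm.card_support_ne_one σ
        have h5 : σ.support.card = 0 := by omega
        rw [Finset.card_eq_zero, Equiv.Perm.support_eq_empty_iff] at h5
        exact h5
      · rintro rfl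
        simp
    rw [e1, e2, Finset.sum_singleton, swap_sum_eq]
    simp [Equiv.Perm.one_apply]
  rw [h2]
  ring
lemma term_bigO {n : ℕ} (L : Matrix (Fin n) (Fin n) ℝ) (i : Fin n) (σ : Perm (Fin n))
    (hfix : σ i = i) (hcard : 3 ≤ σ.support.card) :
    (fun h : ℝ => ((Perm.sign σ : ℤ) : ℝ) *
        ∏ k ∈ univ.erase i, (1 - h • L : Matrix (Fin n) (Fin n) ℝ) (σ k) k)
      =O[nhds (0 : ℝ)] fun h : ℝ => h ^ 3 := by
  set m := σ.support.card with hm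
  have hsub : σ.support ⊆ univ.erase i := by
    intro k hk
    refine Finset.mem_erase.mpr ⟨?_, Finset.mem_univ _⟩
    rintro rfl
    exact (Equiv.Perm.mem_support.mp hk) hfix
  have hprod : ∀ h : ℝ, ((Perm.sign σ : ℤ) : ℝ) *
        ∏ k ∈ univ.erase i, (1 - h • L : Matrix (Fin n) (Fin n) ℝ) (σ k) k
      = (((Perm.sign σ : ℤ) : ℝ) * ∏ k ∈ σ.support, L (σ k) k) *
        ((-h) ^ m * ∏ k ∈ univ.erase i \ σ.support, (1 - h * L k k)) := by
    intro h
    rw [← Finset.prod_sdiff hsub]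
    have hs : ∏ k ∈ σ.support, (1 - h • L : Matrix (Fin n) (Fin n) ℝ) (σ k) k
        = (-h) ^ m * ∏ k ∈ σ.support, L (σ k) k := by
      have : ∀ k ∈ σ.support, (1 - h • L : Matrix (Fin n) (Fin n) ℝ) (σ k) k
          = (-h) * L (σ k) k := by
        intro k hk
        have hne : σ k ≠ k := Equiv.Perm.mem_support.mp hk
        simp [Matrix.sub_apply, Matrix.smul_apply, Matrix.one_apply, hne, smul_eq_mul]
      rw [Finset.prod_congr rfl this, Finset.prod_mul_distrib, Finset.prod_const, hm]
    have hd : ∏ k ∈ univ.erase i \ σ.support, (1 - h • L : Matrix (Fin n) (Fin n) ℝ) (σ k) k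
        = ∏ k ∈ univ.erase i \ σ.support, (1 - h * L k k) := by
      apply Finset.prod_congr rfl
      intro k hk
      have hfk : σ k = k := by
        by_contra hc
        exact (Finset.mem_sdiff.mp hk).2 (Equiv.Perm.mem_support.mpr hc)
      rw [hfk]
      simp [Matrix.sub_apply, Matrix.smul_apply, Matrix.one_apply, smul_eq_mul]
    rw [hs, hd]
    ring
  have hb1 : (fun h : ℝ => (-h) ^ m) =O[nhds (0 : ℝ)] fun h => h ^ 3 := by
    rw [isBigO_iff]
    refine ⟨1, ?_⟩
    have hball : ∀ᶠ h : ℝ in nhds 0, |h| < 1 := by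
      filter_upwards [Metric.ball_mem_nhds (0 : ℝ) one_pos] with h hh
      simpa [Real.dist_eq] using hh
    filter_upwards [hball] with h hh
    rw [one_mul, Real.norm_eq_abs, Real.norm_eq_abs, abs_pow, abs_pow, abs_neg]
    exact pow_le_pow_of_le_one (abs_nonneg _) hh.le hcard
  have hb2 : (fun h : ℝ => ∏ k ∈ univ.erase i \ σ.support, (1 - h * L k k))
      =O[nhds (0 : ℝ)] (fun _ => (1 : ℝ)) := by
    apply Filter.Tendsto.isBigO_one
    exact Continuous.tendsto (by continuity) 0
  have hb3 : (fun h : ℝ => (-h) ^ m * ∏ k ∈ univ.erase i \ σ.support, (1 - h * L k k))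
      =O[nhds (0 : ℝ)] fun h => h ^ 3 := by
    simpa using hb1.mul hb2
  have := hb3.const_mul_left (((Perm.sign σ : ℤ) : ℝ) * ∏ k ∈ σ.support, L (σ k) k)
  exact this.congr_left fun h => (hprod h).symm

theorem stmt_3 (n : ℕ) (hn : 1 ≤ n) (L : Matrix (Fin n) (Fin n) ℝ) (i : Fin n) :
    (fun h : ℝ =>
        (1 - h • L : Matrix (Fin n) (Fin n) ℝ).adjugate i i -
          (∏ k ∈ univ.filter (fun k => k ≠ i), (1 - h • L : Matrix (Fin n) (Fin n) ℝ) k k -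
            ∑ p ∈ univ.filter (fun p : Fin n × Fin n => p.1 < p.2 ∧ p.1 ≠ i ∧ p.2 ≠ i),
              (1 - h • L : Matrix (Fin n) (Fin n) ℝ) p.1 p.2 *
                (1 - h • L : Matrix (Fin n) (Fin n) ℝ) p.2 p.1 *
                ∏ l ∈ univ.filter (fun l => l ≠ i ∧ l ≠ p.1 ∧ l ≠ p.2),
                  (1 - h • L : Matrix (Fin n) (Fin n) ℝ) l l))
      =O[nhds (0 : ℝ)] fun h : ℝ => h ^ 3 := by
  have heq : (fun h : ℝ =>
        (1 - h • L : Matrix (Fin n) (Fin n) ℝ).adjugate i i -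
          (∏ k ∈ univ.filter (fun k => k ≠ i), (1 - h • L : Matrix (Fin n) (Fin n) ℝ) k k -
            ∑ p ∈ univ.filter (fun p : Fin n × Fin n => p.1 < p.2 ∧ p.1 ≠ i ∧ p.2 ≠ i),
              (1 - h • L : Matrix (Fin n) (Fin n) ℝ) p.1 p.2 *
                (1 - h • L : Matrix (Fin n) (Fin n) ℝ) p.2 p.1 *
                ∏ l ∈ univ.filter (fun l => l ≠ i ∧ l ≠ p.1 ∧ l ≠ p.2),
                  (1 - h • L : Matrix (Fin n) (Fin n) ℝ) l l))
      = fun h : ℝ =>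
        ∑ σ ∈ univ.filter (fun σ : Perm (Fin n) => σ i = i ∧ 3 ≤ σ.support.card),
          ((Perm.sign σ : ℤ) : ℝ) *
            ∏ k ∈ univ.erase i, (1 - h • L : Matrix (Fin n) (Fin n) ℝ) (σ k) k :=
    funext fun h => pointwise_eq (1 - h • L) i
  rw [heq]
  apply Asymptotics.IsBigO.fun_sum
  intro σ hσ
  simp only [Finset.mem_filter, Finset.mem_univ, true_and] at hσ
  exact term_bigO L i σ hσ.1 hσ.2
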